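/- Let (w, ξ_w) be a pair of random vectors in ℝ^d × ℝ^d with w ≠ 0 almost surely and suitable integrability, and let (v, ξ_v) be an independent identically distributed copy. For any integer k ≥ 0, E[⟨w̄, v̄⟩^{2k} (⟨ξ_w, v⟩⟨w, ξ_v⟩ + ⟨w, ξ_v⟩²)] = (1/2) E[⟨w̄, v̄⟩^{2k} (⟨w, ξ_v⟩ + ⟨v, ξ_w⟩)²] ≥ 0, where w̄ = w/‖w‖ and v̄ = v/‖v‖. -/

import Mathlib

open MeasureTheory ProbabilityTheory RealInnerProductSpace

noncomputable def cfAux {d : ℕ} (k : ℕ)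
    (p q : EuclideanSpace ℝ (Fin d) × EuclideanSpace ℝ (Fin d)) : ℝ :=
  ⟪(‖p.1‖⁻¹ • p.1 : EuclideanSpace ℝ (Fin d)), ‖q.1‖⁻¹ • q.1⟫ ^ (2 * k)

noncomputable def afAux {d : ℕ}
    (p q : EuclideanSpace ℝ (Fin d) × EuclideanSpace ℝ (Fin d)) : ℝ := ⟪p.2, q.1⟫

noncomputable def bfAux {d : ℕ}
    (p q : EuclideanSpace ℝ (Fin d) × EuclideanSpace ℝ (Fin d)) : ℝ := ⟪p.1, q.2⟫

lemma cfAux_symm {d : ℕ} (k : ℕ) (p q : EuclideanSpace ℝ (Fin d) × EuclideanSpace ℝ (Fin d)) :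
    cfAux k q p = cfAux k p q := by
  unfold cfAux; rw [real_inner_comm]

lemma afAux_swap {d : ℕ} (p q : EuclideanSpace ℝ (Fin d) × EuclideanSpace ℝ (Fin d)) :
    afAux q p = bfAux p q := by
  unfold afAux bfAux; rw [real_inner_comm]

lemma cfAux_nonneg {d : ℕ} (k : ℕ) (p q : EuclideanSpace ℝ (Fin d) × EuclideanSpace ℝ (Fin d)) :
    0 ≤ cfAux k p q := by
  unfold cfAux
  rw [mul_comm, pow_mul]
  positivity

lemma cfAux_le_one {d : ℕ} (k : ℕ) (p q : EuclideanSpace ℝ (Fin d) × EuclideanSpace ℝ (Fin d)) :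
    cfAux k p q ≤ 1 := by
  have h1 : ∀ x : EuclideanSpace ℝ (Fin d), ‖(‖x‖⁻¹ • x : EuclideanSpace ℝ (Fin d))‖ ≤ 1 := by
    intro x
    rw [norm_smul, norm_inv, norm_norm]
    rcases eq_or_ne x 0 with h | h
    · simp [h]
    · rw [inv_mul_cancel₀ (norm_ne_zero_iff.mpr h)]
  have h2 : |⟪(‖p.1‖⁻¹ • p.1 : EuclideanSpace ℝ (Fin d)), ‖q.1‖⁻¹ • q.1⟫| ≤ 1 := by
    refine (abs_real_inner_le_norm _ _).trans ?_
    calc ‖(‖p.1‖⁻¹ • p.1 : EuclideanSpace ℝ (Fin d))‖ * ‖(‖q.1‖⁻¹ • q.1 : EuclideanSpace ℝ (Fin d))‖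
        ≤ 1 * 1 := mul_le_mul (h1 _) (h1 _) (norm_nonneg _) zero_le_one
      _ = 1 := one_mul 1
  calc cfAux k p q ≤ |cfAux k p q| := le_abs_self _
    _ = |⟪(‖p.1‖⁻¹ • p.1 : EuclideanSpace ℝ (Fin d)), ‖q.1‖⁻¹ • q.1⟫| ^ (2 * k) := by
        rw [cfAux, abs_pow]
    _ ≤ 1 ^ (2 * k) := pow_le_pow_left₀ (abs_nonneg _) h2 _
    _ = 1 := one_pow _

lemma cfAux_measurable {d : ℕ} (k : ℕ) :
    Measurable (fun r : (EuclideanSpace ℝ (Fin d) × EuclideanSpace ℝ (Fin d)) ×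
      (EuclideanSpace ℝ (Fin d) × EuclideanSpace ℝ (Fin d)) => cfAux k r.1 r.2) := by
  unfold cfAux
  refine Measurable.pow_const (Measurable.inner ?_ ?_) _
  · exact ((measurable_fst.comp measurable_fst).norm.inv).smul (measurable_fst.comp measurable_fst)
  · exact ((measurable_fst.comp measurable_snd).norm.inv).smul (measurable_fst.comp measurable_snd)

lemma afAux_measurable {d : ℕ} :
    Measurable (fun r : (EuclideanSpace ℝ (Fin d) × EuclideanSpace ℝ (Fin d)) ×
      (EuclideanSpace ℝ (Fin d) × EuclideanSpace ℝ (Fin d)) => afAux r.1 r.2) := by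
  unfold afAux
  exact Measurable.inner (measurable_snd.comp measurable_fst) (measurable_fst.comp measurable_snd)

lemma bfAux_measurable {d : ℕ} :
    Measurable (fun r : (EuclideanSpace ℝ (Fin d) × EuclideanSpace ℝ (Fin d)) ×
      (EuclideanSpace ℝ (Fin d) × EuclideanSpace ℝ (Fin d)) => bfAux r.1 r.2) := by
  unfold bfAux
  exact Measurable.inner (measurable_fst.comp measurable_fst) (measurable_snd.comp measurable_snd)

set_option maxHeartbeats 1000000 in
theorem exchangeable_square_identity {d : ℕ} (k : ℕ)
    {Ω : Type*} [MeasurableSpace Ω] (μ : Measure Ω) [IsProbabilityMeasure μ]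
    (X Y : Ω → EuclideanSpace ℝ (Fin d) × EuclideanSpace ℝ (Fin d))
    (hXY_indep : IndepFun X Y μ)
    (hXY_ident : IdentDistrib X Y μ μ)
    (hw_pos : ∀ᵐ ω ∂μ, 0 < ‖(X ω).1‖)
    (hint : Integrable (fun ω => (‖(X ω).1‖ * ‖(X ω).2‖) ^ 2) μ) :
    (∫ ω, ⟪(‖(X ω).1‖⁻¹ • (X ω).1 : EuclideanSpace ℝ (Fin d)),
            ‖(Y ω).1‖⁻¹ • (Y ω).1⟫ ^ (2 * k) *
          (⟪(X ω).2, (Y ω).1⟫ * ⟪(X ω).1, (Y ω).2⟫ + ⟪(X ω).1, (Y ω).2⟫ ^ 2) ∂μ)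
      = (1 / 2) *
        ∫ ω, ⟪(‖(X ω).1‖⁻¹ • (X ω).1 : EuclideanSpace ℝ (Fin d)),
              ‖(Y ω).1‖⁻¹ • (Y ω).1⟫ ^ (2 * k) *
            (⟪(X ω).1, (Y ω).2⟫ + ⟪(Y ω).1, (X ω).2⟫) ^ 2 ∂μ ∧
    0 ≤ (1 / 2) *
        ∫ ω, ⟪(‖(X ω).1‖⁻¹ • (X ω).1 : EuclideanSpace ℝ (Fin d)),
              ‖(Y ω).1‖⁻¹ • (Y ω).1⟫ ^ (2 * k) *
            (⟪(X ω).1, (Y ω).2⟫ + ⟪(Y ω).1, (X ω).2⟫) ^ 2 ∂μ := by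
  have hXm : AEMeasurable X μ := hXY_ident.aemeasurable_fst
  have hYm : AEMeasurable Y μ := hXY_ident.aemeasurable_snd
  -- rewrite the goal in terms of cfAux, afAux, bfAux
  have hrw : ∀ ω, (⟪(X ω).1, (Y ω).2⟫ + ⟪(Y ω).1, (X ω).2⟫ : ℝ)
      = bfAux (X ω) (Y ω) + afAux (X ω) (Y ω) := by
    intro ω
    rw [real_inner_comm ((X ω).2) ((Y ω).1)]
    rfl
  simp_rw [hrw]
  show (∫ ω, cfAux k (X ω) (Y ω) *
        (afAux (X ω) (Y ω) * bfAux (X ω) (Y ω) + bfAux (X ω) (Y ω) ^ 2) ∂μ)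
      = (1 / 2) * ∫ ω, cfAux k (X ω) (Y ω) * (bfAux (X ω) (Y ω) + afAux (X ω) (Y ω)) ^ 2 ∂μ ∧
    0 ≤ (1 / 2) * ∫ ω, cfAux k (X ω) (Y ω) * (bfAux (X ω) (Y ω) + afAux (X ω) (Y ω)) ^ 2 ∂μ
  
  set C : Ω → ℝ := fun ω => cfAux k (X ω) (Y ω) with hC
  set A : Ω → ℝ := fun ω => afAux (X ω) (Y ω) with hA
  set B : Ω → ℝ := fun ω => bfAux (X ω) (Y ω) with hB
  -- the swapped pair is identically distributed
  have hZm : AEMeasurable (fun ω => (X ω, Y ω)) μ := hXm.prodMk hYm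
  have hZ'm : AEMeasurable (fun ω => (Y ω, X ω)) μ := hYm.prodMk hXm
  have hswap : IdentDistrib (fun ω => (X ω, Y ω)) (fun ω => (Y ω, X ω)) μ μ := by
    refine ⟨hZm, hZ'm, ?_⟩
    rw [(indepFun_iff_map_prod_eq_prod_map_map hXm hYm).1 hXY_indep,
      (indepFun_iff_map_prod_eq_prod_map_map hYm hXm).1 hXY_indep.symm,
      hXY_ident.map_eq]
  -- identically distributed squares
  have hF : Measurable (fun r : (EuclideanSpace ℝ (Fin d) × EuclideanSpace ℝ (Fin d)) ×
      (EuclideanSpace ℝ (Fin d) × EuclideanSpace ℝ (Fin d)) => cfAux k r.1 r.2 * afAux r.1 r.2 ^ 2) :=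
    (cfAux_measurable k).mul (afAux_measurable.pow_const 2)
  have hCA2B2 : IdentDistrib (fun ω => C ω * A ω ^ 2) (fun ω => C ω * B ω ^ 2) μ μ := by
    have h := hswap.comp hF
    have he : ((fun r : (EuclideanSpace ℝ (Fin d) × EuclideanSpace ℝ (Fin d)) ×
        (EuclideanSpace ℝ (Fin d) × EuclideanSpace ℝ (Fin d)) =>
          cfAux k r.1 r.2 * afAux r.1 r.2 ^ 2) ∘ fun ω => (Y ω, X ω))
        = fun ω => C ω * B ω ^ 2 := by
      funext ω
      show cfAux k (Y ω) (X ω) * afAux (Y ω) (X ω) ^ 2 = _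
      rw [cfAux_symm, afAux_swap]
    rw [he] at h
    exact h
  -- measurability of the integrands
  have hX1 : AEMeasurable (fun ω => (X ω).1) μ := measurable_fst.comp_aemeasurable hXm
  have hX2 : AEMeasurable (fun ω => (X ω).2) μ := measurable_snd.comp_aemeasurable hXm
  have hY1 : AEMeasurable (fun ω => (Y ω).1) μ := measurable_fst.comp_aemeasurable hYm
  have hY2 : AEMeasurable (fun ω => (Y ω).2) μ := measurable_snd.comp_aemeasurable hYm
  have hCm : AEMeasurable C μ := by
    rw [hC]
    unfold cfAux
    exact (AEMeasurable.inner ((hX1.norm.inv).smul hX1) ((hY1.norm.inv).smul hY1)).pow_const _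
  have hAm : AEMeasurable A μ := by
    rw [hA]; unfold afAux; exact hX2.inner hY1
  have hBm : AEMeasurable B μ := by
    rw [hB]; unfold bfAux; exact hX1.inner hY2
  have hCABm : AEStronglyMeasurable (fun ω => C ω * (A ω * B ω)) μ :=
    (hCm.mul (hAm.mul hBm)).aestronglyMeasurable
  have hCB2m : AEStronglyMeasurable (fun ω => C ω * B ω ^ 2) μ :=
    (hCm.mul (hBm.pow_const 2)).aestronglyMeasurable
  -- the bound function
  have hg : Measurable (fun p : EuclideanSpace ℝ (Fin d) × EuclideanSpace ℝ (Fin d) =>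
      ‖p.1‖ * ‖p.2‖) := measurable_fst.norm.mul measurable_snd.norm
  have hgX : Integrable (fun ω => ‖(X ω).1‖ * ‖(X ω).2‖) μ := by
    have hmem : MemLp (fun ω => ‖(X ω).1‖ * ‖(X ω).2‖) 2 μ :=
      (memLp_two_iff_integrable_sq
        (hg.comp_aemeasurable hXm).aestronglyMeasurable).2 hint
    exact hmem.integrable (by norm_num)
  have hgY : Integrable (fun ω => ‖(Y ω).1‖ * ‖(Y ω).2‖) μ :=
    (hXY_ident.comp hg).integrable_iff.1 hgX
  have hgind : IndepFun (fun ω => ‖(X ω).1‖ * ‖(X ω).2‖) (fun ω => ‖(Y ω).1‖ * ‖(Y ω).2‖) μ :=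
    hXY_indep.comp hg hg
  have hprod : Integrable (fun ω => (‖(X ω).1‖ * ‖(X ω).2‖) * (‖(Y ω).1‖ * ‖(Y ω).2‖)) μ :=
    hgind.integrable_mul hgX hgY
  -- pointwise bound on C * (A * B)
  have hbound : ∀ ω, ‖C ω * (A ω * B ω)‖ ≤ ‖(‖(X ω).1‖ * ‖(X ω).2‖) * (‖(Y ω).1‖ * ‖(Y ω).2‖)‖ := by
    intro ω
    have hA1 : |A ω| ≤ ‖(X ω).2‖ * ‖(Y ω).1‖ := abs_real_inner_le_norm _ _
    have hB1 : |B ω| ≤ ‖(X ω).1‖ * ‖(Y ω).2‖ := abs_real_inner_le_norm _ _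
    have hC1 : |C ω| ≤ 1 := by
      rw [abs_of_nonneg (cfAux_nonneg k _ _)]
      exact cfAux_le_one k _ _
    rw [Real.norm_eq_abs, Real.norm_eq_abs, abs_mul, abs_mul]
    calc |C ω| * (|A ω| * |B ω|)
        ≤ 1 * ((‖(X ω).2‖ * ‖(Y ω).1‖) * (‖(X ω).1‖ * ‖(Y ω).2‖)) := by
          refine mul_le_mul hC1 (mul_le_mul hA1 hB1 (abs_nonneg _) (by positivity)) (by positivity) zero_le_one
      _ = |‖(X ω).1‖ * ‖(X ω).2‖| * |‖(Y ω).1‖ * ‖(Y ω).2‖| := by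
          rw [abs_of_nonneg (by positivity), abs_of_nonneg (by positivity)]; ring
      _ = |‖(X ω).1‖ * ‖(X ω).2‖ * (‖(Y ω).1‖ * ‖(Y ω).2‖)| := (abs_mul _ _).symm
  have hCAB : Integrable (fun ω => C ω * (A ω * B ω)) μ :=
    hprod.mono hCABm (Filter.Eventually.of_forall hbound)
  -- nonnegativity of the right-hand side
  have hnonneg : 0 ≤ (1 / 2 : ℝ) * ∫ ω, C ω * (B ω + A ω) ^ 2 ∂μ := by
    refine mul_nonneg (by norm_num) (integral_nonneg fun ω => ?_)
    exact mul_nonneg (cfAux_nonneg k _ _) (sq_nonneg _)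
  refine ⟨?_, hnonneg⟩
  by_cases hI : Integrable (fun ω => C ω * B ω ^ 2) μ
  · have hIA : Integrable (fun ω => C ω * A ω ^ 2) μ := hCA2B2.integrable_iff.2 hI
    have hEq : ∫ ω, C ω * A ω ^ 2 ∂μ = ∫ ω, C ω * B ω ^ 2 ∂μ := hCA2B2.integral_eq
    have e1 : ∫ ω, C ω * (A ω * B ω + B ω ^ 2) ∂μ
        = (∫ ω, C ω * (A ω * B ω) ∂μ) + ∫ ω, C ω * B ω ^ 2 ∂μ := by
      rw [← integral_add hCAB hI]
      congr 1; funext ω; ring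
    have e2 : ∫ ω, C ω * (B ω + A ω) ^ 2 ∂μ
        = (∫ ω, C ω * B ω ^ 2 ∂μ) + ((2 : ℝ) * ∫ ω, C ω * (A ω * B ω) ∂μ)
          + ∫ ω, C ω * A ω ^ 2 ∂μ := by
      have hfe : (fun ω => C ω * (B ω + A ω) ^ 2)
          = fun ω => (C ω * B ω ^ 2 + 2 * (C ω * (A ω * B ω))) + C ω * A ω ^ 2 := by
        funext ω; ring
      have h1 : Integrable (fun ω => C ω * B ω ^ 2 + 2 * (C ω * (A ω * B ω))) μ :=
        hI.add (hCAB.const_mul (2 : ℝ))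
      rw [hfe, integral_add h1 hIA, integral_add hI (hCAB.const_mul (2 : ℝ)),
        integral_const_mul]
    rw [e1, e2, hEq]; ring
  · -- non-integrable case: both integrals vanish
    have hL : ¬ Integrable (fun ω => C ω * (A ω * B ω + B ω ^ 2)) μ := by
      intro h
      apply hI
      have : (fun ω => C ω * B ω ^ 2)
          = fun ω => C ω * (A ω * B ω + B ω ^ 2) - C ω * (A ω * B ω) := by
        funext ω; ring
      rw [this]
      exact h.sub hCAB
    have hR : ¬ Integrable (fun ω => C ω * (B ω + A ω) ^ 2) μ := by
      intro h
      apply hI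
      have hsum : Integrable (fun ω => C ω * A ω ^ 2 + C ω * B ω ^ 2) μ := by
        have : (fun ω => C ω * A ω ^ 2 + C ω * B ω ^ 2)
            = fun ω => C ω * (B ω + A ω) ^ 2 - (2 : ℝ) • (fun ω => C ω * (A ω * B ω)) ω := by
          funext ω; simp only [Pi.smul_apply, smul_eq_mul]; ring
        rw [this]
        exact h.sub (hCAB.smul (2 : ℝ))
      refine hsum.mono hCB2m (Filter.Eventually.of_forall fun ω => ?_)
      have h1 : 0 ≤ C ω * B ω ^ 2 := mul_nonneg (cfAux_nonneg k _ _) (sq_nonneg _)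
      have h2 : 0 ≤ C ω * A ω ^ 2 := mul_nonneg (cfAux_nonneg k _ _) (sq_nonneg _)
      rw [Real.norm_eq_abs, Real.norm_eq_abs, abs_of_nonneg h1, abs_of_nonneg (by linarith)]
      linarith
    rw [integral_undef hL, integral_undef hR]
    ring
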